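/- Let 𝔄 be an arbitrary n-ary algebra over a field 𝔽 (n ≥ 2) with product [·,…,·], ℬ a basis of 𝔄, and let ⌢𝔄_{[e_i]} be one of the ideals in the induced decomposition 𝔄 = ⊕ ⌢𝔄_{[e_i]}. Then the n-ary algebra (⌢𝔄_{[e_i]}, [·,…,·]) obtained by restricting the product is simple if and only if Ann(⌢𝔄_{[e_i]}) = 0 and ℬ′ := ℬ ∩ ⌢𝔄_{[e_i]} is an i-division basis of ⌢𝔄_{[e_i]}. -/

import Mathlib

/- Common setting: `V` is a vector space over a field `𝔽`, and `f` is an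
`n`-linear map on `V` where `n = m + 1 ≥ 2` (i.e. `1 ≤ m`).  Tuples of
length `n - 1 = m` index the last arguments of the set-valued map `F`. -/

open scoped Classical

noncomputable section

variable {𝔽 V I : Type*}

/-- The set `V* = V \ {0}` of nonzero vectors. -/
abbrev Vstar (V : Type*) [Zero V] := {v : V // v ≠ 0}

/-- The disjoint union `ℬ ∪̇ ℬ̄`, encoded by indices: `(false, i)` stands for the
basis vector `e i ∈ ℬ` and `(true, i)` for the formal bar symbol `ē i ∈ ℬ̄`. -/
abbrev BSym (I : Type*) := Bool × I

/-- The bar-swap on `ℬ ∪̇ ℬ̄`. -/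
def barSwap {I : Type*} (s : BSym I) : BSym I := (!s.1, s.2)

variable [Field 𝔽] [AddCommGroup V] [Module 𝔽 V] {m : ℕ}

/-- A basis vector, as an element of `V*`. -/
def bstar (b : Module.Basis I 𝔽 V) (i : I) : Vstar V := ⟨b i, b.ne_zero i⟩

/-- The set-valued map `F : 𝒫(V*) × (ℬ ∪̇ ℬ̄)^{n-1} → 𝒫(V*)` associated to the
`n`-linear map `f` and the basis `b` (here `n = m + 1`). -/
def Fmap (b : Module.Basis I 𝔽 V) (f : MultilinearMap 𝔽 (fun _ : Fin (m + 1) => V) V)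
    (U : Set (Vstar V)) (ξ : Fin m → BSym I) : Set (Vstar V) :=
  if ∀ t, (ξ t).1 = false then
    {w | ∃ (k : Fin (m + 1)) (σ : Equiv.Perm (Fin m)), ∃ u ∈ U,
      f (Fin.insertNth k u.1 fun t => b (ξ (σ t)).2) = w.1}
  else if ∀ t, (ξ t).1 = true then
    {w | ∃ (k : Fin (m + 1)) (σ : Equiv.Perm (Fin m)), ∃ u ∈ U,
      f (Fin.insertNth k w.1 fun t => b (ξ (σ t)).2) = u.1}
  else ∅

/-- Iterated application of `F` along a list of `(n-1)`-tuples. -/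
def iterF (b : Module.Basis I 𝔽 V) (f : MultilinearMap 𝔽 (fun _ : Fin (m + 1) => V) V) :
    Set (Vstar V) → List (Fin m → BSym I) → Set (Vstar V)
  | U, [] => U
  | U, X :: Xs => iterF b f (Fmap b f U X) Xs

/-- `X` is a connection from `e i` to `e j`.  (Since `F(∅,⋯) = ∅`, the requirement
that all intermediate iterated images are nonempty is equivalent to the final
image containing `e j`.) -/
def IsConnection (b : Module.Basis I 𝔽 V) (f : MultilinearMap 𝔽 (fun _ : Fin (m + 1) => V) V)
    (i j : I) (X : List (Fin m → BSym I)) : Prop :=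
  X ≠ [] ∧ bstar b j ∈ iterF b f {bstar b i} X

/-- `e i` is connected to `e j`. -/
def Connected (b : Module.Basis I 𝔽 V) (f : MultilinearMap 𝔽 (fun _ : Fin (m + 1) => V) V)
    (i j : I) : Prop :=
  i = j ∨ ∃ X : List (Fin m → BSym I), IsConnection b f i j X

/-- Two subspaces `W₁, W₂` are `f`-orthogonal. -/
def FOrthogonal (f : MultilinearMap 𝔽 (fun _ : Fin (m + 1) => V) V)
    (W₁ W₂ : Submodule 𝔽 V) : Prop :=
  ∀ k₁ k₂ : Fin (m + 1), k₁ ≠ k₂ →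
    ∀ v : Fin (m + 1) → V, v k₁ ∈ W₁ → v k₂ ∈ W₂ → f v = 0

/-- A subspace `W` is strongly `f`-invariant: `f(V,…,W,…,V) ⊆ W` for every slot. -/
def StronglyInvariant (f : MultilinearMap 𝔽 (fun _ : Fin (m + 1) => V) V)
    (W : Submodule 𝔽 V) : Prop :=
  ∀ (k : Fin (m + 1)) (v : Fin (m + 1) → V), v k ∈ W → f v ∈ W

/-- `V_{[e i]}`, the span of the connection class of `e i`. -/
def classSpan (b : Module.Basis I 𝔽 V) (f : MultilinearMap 𝔽 (fun _ : Fin (m + 1) => V) V)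
    (i : I) : Submodule 𝔽 V :=
  Submodule.span 𝔽 (⇑b '' {j | Connected b f i j})

/-- The projection `Π_{V_{[e c]}} : V → V_{[e c]}` relative to the decomposition
`V = ⊕ V_{[e i]}` (expressed through basis coordinates). -/
def projClass (b : Module.Basis I 𝔽 V) (f : MultilinearMap 𝔽 (fun _ : Fin (m + 1) => V) V)
    (c : I) : V →ₗ[𝔽] V :=
  b.constr 𝔽 fun j => if Connected b f c j then b j else 0

/-- One step of the relation `≈`: the sum over `k₁ < k₂` of
`Π_{V_{[c]}}(f(V,…,V_{[d]},…,V_{[d]},…,V)) + Π_{V_{[d]}}(f(V,…,V_{[c]},…,V_{[c]},…,V))`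
is nonzero. -/
def ApproxStep (b : Module.Basis I 𝔽 V) (f : MultilinearMap 𝔽 (fun _ : Fin (m + 1) => V) V)
    (c d : I) : Prop :=
  ∃ k₁ k₂ : Fin (m + 1), k₁ < k₂ ∧
    ((∃ v : Fin (m + 1) → V, v k₁ ∈ classSpan b f d ∧ v k₂ ∈ classSpan b f d ∧
        projClass b f c (f v) ≠ 0) ∨
     (∃ v : Fin (m + 1) → V, v k₁ ∈ classSpan b f c ∧ v k₂ ∈ classSpan b f c ∧
        projClass b f d (f v) ≠ 0))

/-- `V_{[e i]} ≈ V_{[e j]}`: either they coincide (same connection class) or they are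
linked by a finite chain of classes with nonvanishing projection sums. -/
def Approx (b : Module.Basis I 𝔽 V) (f : MultilinearMap 𝔽 (fun _ : Fin (m + 1) => V) V)
    (i j : I) : Prop :=
  Relation.ReflTransGen (fun c d => Connected b f c d ∨ ApproxStep b f c d) i j

/-- `⌢V_{[e i]} = ⊕_{V_{[e j]} ∈ [V_{[e i]}]} V_{[e j]}`. -/
def hatSpan (b : Module.Basis I 𝔽 V) (f : MultilinearMap 𝔽 (fun _ : Fin (m + 1) => V) V)
    (i : I) : Submodule 𝔽 V :=
  Submodule.span 𝔽 (⇑b '' {j | Approx b f i j})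

/-- Two decompositions of `V` as `f`-orthogonal direct sums of strongly `f`-invariant
subspaces (given as the sets of their summands) are isomorphic: there is a linear
automorphism `h` of `V` commuting with `f` carrying the summands of the first
bijectively onto the summands of the second. -/
def IsoDecomp (f : MultilinearMap 𝔽 (fun _ : Fin (m + 1) => V) V)
    (S T : Set (Submodule 𝔽 V)) : Prop :=
  ∃ h : V ≃ₗ[𝔽] V,
    (∀ v : Fin (m + 1) → V, f (fun k => h (v k)) = h (f v)) ∧
    (Submodule.map (h : V →ₗ[𝔽] V)) '' S = T

/-- `X` is a strongly `f'`-invariant subspace of `W`, where `f'` is the restriction of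
`f` to `W`: `f(W,…,X,…,W) ⊆ X` for every slot. -/
def SInvIn (f : MultilinearMap 𝔽 (fun _ : Fin (m + 1) => V) V)
    (W X : Submodule 𝔽 V) : Prop :=
  ∀ (k : Fin (m + 1)) (v : Fin (m + 1) → V), (∀ t, v t ∈ W) → v k ∈ X → f v ∈ X

/-- `W` is `f'`-simple, `f'` being the restriction of `f` to `W`: the restricted map is
nonzero and the only strongly `f'`-invariant subspaces of `W` are `0` and `W`. -/
def SimpleIn (f : MultilinearMap 𝔽 (fun _ : Fin (m + 1) => V) V)
    (W : Submodule 𝔽 V) : Prop :=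
  (∃ v : Fin (m + 1) → V, (∀ t, v t ∈ W) ∧ f v ≠ 0) ∧
  ∀ X : Submodule 𝔽 V, X ≤ W → SInvIn f W X → X = ⊥ ∨ X = W

/-- The annihilator of the restriction `f'` of `f` to `W`. -/
def annIn (f : MultilinearMap 𝔽 (fun _ : Fin (m + 1) => V) V)
    (W : Submodule 𝔽 V) : Set V :=
  {w | w ∈ W ∧ ∀ (k : Fin (m + 1)) (v : Fin (m + 1) → V),
    (∀ t, v t ∈ W) → v k = w → f v = 0}

/-- `𝓘(w)`: the smallest strongly `f'`-invariant subspace of `W` containing `w`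
(equivalently, the ideal of `(W, f')` generated by `w`). -/
def idealGenIn (f : MultilinearMap 𝔽 (fun _ : Fin (m + 1) => V) V)
    (W : Submodule 𝔽 V) (w : V) : Submodule 𝔽 V :=
  sInf {X : Submodule 𝔽 V | X ≤ W ∧ SInvIn f W X ∧ w ∈ X}

/-- `S` is an `i`-division basis of `W` with respect to the restriction `f'` of `f`:
whenever `c ∈ S`, `b₁, …, b_{n-1} ∈ W` and `f'(b₁,…,c,…,b_{n-1}) = w ≠ 0` with `c` in
some slot `k`, then `c, b₁, …, b_{n-1} ∈ 𝓘(w)`. -/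
def IDivisionBasisIn (f : MultilinearMap 𝔽 (fun _ : Fin (m + 1) => V) V)
    (W : Submodule 𝔽 V) (S : Set V) : Prop :=
  ∀ c ∈ S, ∀ (k : Fin (m + 1)) (v : Fin (m + 1) → V),
    (∀ t, v t ∈ W) → v k = c → f v ≠ 0 → ∀ t, v t ∈ idealGenIn f W (f v)

/-- A Fin (m+1) index different from a given one, when `1 ≤ m`. -/
lemma exists_fin_ne (hm : 1 ≤ m) (k : Fin (m + 1)) : ∃ t : Fin (m + 1), t ≠ k := by
  by_cases h : (k : ℕ) = 0
  · exact ⟨⟨1, by omega⟩, by simp [Fin.ext_iff, h]⟩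
  · exact ⟨⟨0, by omega⟩, by simp [Fin.ext_iff]; omega⟩

/-- The key lemma: if `X` is an ideal of `W` and a nonzero product of elements of `W`
has a basis vector in one slot and an element of `X` in another slot, then all slots
lie in `X`. -/
lemma key_swallow {m : ℕ} (b : Module.Basis I 𝔽 V)
    (f : MultilinearMap 𝔽 (fun _ : Fin (m + 1) => V) V) {W X : Submodule 𝔽 V}
    (hdiv : IDivisionBasisIn f W (Set.range ⇑b ∩ (W : Set V)))
    (hXW : X ≤ W) (hXinv : SInvIn f W X) (v : Fin (m + 1) → V) (k₁ k₂ : Fin (m + 1))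
    (hW : ∀ t, v t ∈ W) (hb : v k₁ ∈ Set.range ⇑b) (hx : v k₂ ∈ X) (hne : f v ≠ 0) :
    ∀ t, v t ∈ X := by
  have hfv : f v ∈ X := hXinv k₂ v hW hx
  have hle : idealGenIn f W (f v) ≤ X := sInf_le ⟨hXW, hXinv, hfv⟩
  intro t
  exact hle (hdiv (v k₁) ⟨hb, hW k₁⟩ k₁ v hW rfl hne t)

/-- the ideal `⌢𝔄_{[e i]}` is simple iff its annihilator is zero and
`ℬ ∩ ⌢𝔄_{[e i]}` is an `i`-division basis of it. -/
theorem stmt19 (hm : 1 ≤ m) (b : Module.Basis I 𝔽 V)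
    (f : MultilinearMap 𝔽 (fun _ : Fin (m + 1) => V) V) (i : I) :
    SimpleIn f (hatSpan b f i) ↔
      annIn f (hatSpan b f i) = {0} ∧
      IDivisionBasisIn f (hatSpan b f i)
        (Set.range ⇑b ∩ (hatSpan b f i : Set V)) := by
  set W := hatSpan b f i with hWdef
  constructor
  · rintro ⟨⟨v₀, hv₀W, hv₀⟩, hmax⟩
    constructor
    · -- annihilator is zero
      let N : Submodule 𝔽 V :=
        { carrier := annIn f W
          add_mem' := by
            rintro x y ⟨hxW, hx⟩ ⟨hyW, hy⟩
            refine ⟨W.add_mem hxW hyW, fun k v hvW hvk => ?_⟩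
            have hv : v = Function.update v k (x + y) := by
              rw [← hvk, Function.update_eq_self]
            rw [hv, f.map_update_add]
            have h1 : f (Function.update v k x) = 0 := by
              refine hx k _ (fun t => ?_) (Function.update_self k x v)
              rcases eq_or_ne t k with rfl | ht
              · rwa [Function.update_self]
              · rw [Function.update_of_ne ht]; exact hvW t
            have h2 : f (Function.update v k y) = 0 := by
              refine hy k _ (fun t => ?_) (Function.update_self k y v)
              rcases eq_or_ne t k with rfl | ht
              · rwa [Function.update_self]
              · rw [Function.update_of_ne ht]; exact hvW t
            rw [h1, h2, add_zero]
          zero_mem' := ⟨W.zero_mem, fun k v _ hvk => f.map_coord_zero k hvk⟩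
          smul_mem' := by
            rintro c x ⟨hxW, hx⟩
            refine ⟨W.smul_mem c hxW, fun k v hvW hvk => ?_⟩
            have hv : v = Function.update v k (c • x) := by
              rw [← hvk, Function.update_eq_self]
            rw [hv, f.map_update_smul]
            have h1 : f (Function.update v k x) = 0 := by
              refine hx k _ (fun t => ?_) (Function.update_self k x v)
              rcases eq_or_ne t k with rfl | ht
              · rwa [Function.update_self]
              · rw [Function.update_of_ne ht]; exact hvW t
            rw [h1, smul_zero] }
      have hNW : N ≤ W := fun x hx => hx.1
      have hNinv : SInvIn f W N := by
        intro k v hvW hvk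
        have : f v = 0 := hvk.2 k v hvW rfl
        rw [this]; exact N.zero_mem
      rcases hmax N hNW hNinv with h | h
      · ext x
        constructor
        · intro hx
          have : x ∈ N := hx
          rw [h] at this
          simpa using this
        · intro hx
          simp only [Set.mem_singleton_iff] at hx
          subst hx
          exact ⟨W.zero_mem, fun k v _ hvk => f.map_coord_zero k hvk⟩
      · exfalso
        have : v₀ 0 ∈ N := by rw [h]; exact hv₀W 0
        exact hv₀ (this.2 0 v₀ hv₀W rfl)
    · -- division basis
      intro c _hc k v hvW hvk hne t
      by_cases hfam : ∃ Y : Submodule 𝔽 V, Y ≤ W ∧ SInvIn f W Y ∧ f v ∈ Y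
      · obtain ⟨Y, hY⟩ := hfam
        have hJW : idealGenIn f W (f v) ≤ W := le_trans (sInf_le hY) hY.1
        have hJinv : SInvIn f W (idealGenIn f W (f v)) := by
          intro k' v' hv'W hv'k
          exact Submodule.mem_sInf.2 fun Z hZ =>
            hZ.2.1 k' v' hv'W (Submodule.mem_sInf.1 hv'k Z hZ)
        have hfvJ : f v ∈ idealGenIn f W (f v) := Submodule.mem_sInf.2 fun Z hZ => hZ.2.2
        rcases hmax _ hJW hJinv with h | h
        · rw [h] at hfvJ
          exact absurd (by simpa using hfvJ) hne
        · rw [h]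
          exact hvW t
      · have hempty : {X : Submodule 𝔽 V | X ≤ W ∧ SInvIn f W X ∧ f v ∈ X} = ∅ := by
          rw [Set.eq_empty_iff_forall_notMem]
          intro Y hY
          exact hfam ⟨Y, hY⟩
        have : idealGenIn f W (f v) = ⊤ := by
          rw [idealGenIn, hempty, sInf_empty]
        rw [this]
        exact Submodule.mem_top
  · rintro ⟨hann, hdiv⟩
    have hiW : b i ∈ W := Submodule.subset_span ⟨i, Relation.ReflTransGen.refl, rfl⟩
    -- every nonzero element of W has a nonzero product
    have getProd : ∀ x, x ∈ W → x ≠ 0 →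
        ∃ (k : Fin (m + 1)) (v : Fin (m + 1) → V),
          (∀ t, v t ∈ W) ∧ v k = x ∧ f v ≠ 0 := by
      intro x hxW hx0
      by_contra h
      push_neg at h
      have hmem : x ∈ annIn f W := by
        refine ⟨hxW, fun k v hvW hvk => ?_⟩
        by_contra hne
        exact hne (h k v hvW hvk)
      rw [hann] at hmem
      exact hx0 hmem
    constructor
    · obtain ⟨k, v, hvW, _, hne⟩ := getProd (b i) hiW (b.ne_zero i)
      exact ⟨v, hvW, hne⟩
    · intro X hXW hXinv
      by_cases hbot : X = ⊥
      · exact Or.inl hbot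
      right
      obtain ⟨x, hxX, hx0⟩ := (Submodule.ne_bot_iff X).1 hbot
      -- Step 1: find a basis vector of W lying in X
      obtain ⟨k, v, hvW, hvk, hne⟩ := getProd x (hXW hxX) hx0
      obtain ⟨t₀, ht₀⟩ := exists_fin_ne hm k
      have hgen : ∃ y ∈ ⇑b '' {j | Approx b f i j},
          f (Function.update v t₀ y) ≠ 0 := by
        by_contra h
        push_neg at h
        have hker : Submodule.span 𝔽 (⇑b '' {j | Approx b f i j}) ≤
            LinearMap.ker (f.toLinearMap v t₀) := by
          rw [Submodule.span_le]
          intro y hy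
          simp only [SetLike.mem_coe, LinearMap.mem_ker, MultilinearMap.toLinearMap_apply]
          exact h y hy
        have : f (Function.update v t₀ (v t₀)) = 0 := hker (hvW t₀)
        rw [Function.update_eq_self] at this
        exact hne this
      obtain ⟨y, hymem, hfy⟩ := hgen
      obtain ⟨a, haS, rfl⟩ := hymem
      have haW : b a ∈ W := Submodule.subset_span ⟨a, haS, rfl⟩
      have hupdW : ∀ t, Function.update v t₀ (b a) t ∈ W := by
        intro t
        rcases eq_or_ne t t₀ with rfl | ht
        · rwa [Function.update_self]
        · rw [Function.update_of_ne ht]; exact hvW t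
      have hbaX : b a ∈ X := by
        have := key_swallow b f hdiv hXW hXinv (Function.update v t₀ (b a)) t₀ k hupdW
          (by rw [Function.update_self]; exact ⟨a, rfl⟩)
          (by rw [Function.update_of_ne (Ne.symm ht₀)]; exact hvk ▸ hxX) hfy t₀
        rwa [Function.update_self] at this
      -- Step 2: every basis vector of W lies in X
      have main : ∀ l, Approx b f i l → b l ∈ X := by
        intro l hl
        have hlW : b l ∈ W := Submodule.subset_span ⟨l, hl, rfl⟩
        obtain ⟨k', w, hwW, hwk, hwne⟩ := getProd (b a) haW (b.ne_zero a)
        have hall : ∀ t, w t ∈ X :=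
          key_swallow b f hdiv hXW hXinv w k' k' hwW
            (hwk ▸ ⟨a, rfl⟩) (hwk ▸ hbaX) hwne
        obtain ⟨t₁, ht₁⟩ := exists_fin_ne hm k'
        by_cases hT : f (Function.update w t₁ (b l)) = 0
        · -- use the sum trick
          set u : Fin (m + 1) → V := Function.update w t₁ (w t₁ + b l) with hu
          have huW : ∀ t, u t ∈ W := by
            intro t
            rcases eq_or_ne t t₁ with rfl | ht
            · rw [hu, Function.update_self]; exact W.add_mem (hwW t) hlW
            · rw [hu, Function.update_of_ne ht]; exact hwW t
          have hfu : f u = f w := by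
            rw [hu, f.map_update_add, Function.update_eq_self, hT, add_zero]
          have hallu : ∀ t, u t ∈ X := by
            refine key_swallow b f hdiv hXW hXinv u k' k' huW ?_ ?_ ?_
            · rw [hu, Function.update_of_ne (Ne.symm ht₁), hwk]; exact ⟨a, rfl⟩
            · rw [hu, Function.update_of_ne (Ne.symm ht₁), hwk]; exact hbaX
            · rw [hfu]; exact hwne
          have : w t₁ + b l ∈ X := by
            have := hallu t₁
            rwa [hu, Function.update_self] at this
          have := X.sub_mem this (hall t₁)
          simpa using this
        · -- direct application
          have hupdW' : ∀ t, Function.update w t₁ (b l) t ∈ W := by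
            intro t
            rcases eq_or_ne t t₁ with rfl | ht
            · rwa [Function.update_self]
            · rw [Function.update_of_ne ht]; exact hwW t
          have := key_swallow b f hdiv hXW hXinv (Function.update w t₁ (b l)) k' k' hupdW'
            (by rw [Function.update_of_ne (Ne.symm ht₁), hwk]; exact ⟨a, rfl⟩)
            (by rw [Function.update_of_ne (Ne.symm ht₁), hwk]; exact hbaX) hT t₁
          rwa [Function.update_self] at this
      refine le_antisymm hXW ?_
      rw [hWdef, hatSpan]
      rw [Submodule.span_le]
      rintro y ⟨l, hl, rfl⟩
      exact main l hl
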